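/- An integrable function f on X belongs to H¹_z(X) if and only if there exist scalars λ_i with Σ|λ_i| < ∞ and (1,2)-atoms a_i whose supporting balls are entirely contained in X, such that f = Σ λ_i a_i with convergence in L¹(X,ν). -/

import Mathlib

open MeasureTheory Metric Filter Set

noncomputable section

/-- The parabolic quasi-distance on `ℝ × E`. -/
def pdist {E : Type*} [MetricSpace E] (p q : ℝ × E) : ℝ :=
  max (Real.sqrt |p.1 - q.1|) (dist p.2 q.2)

/-- The open parabolic ball in `N = ℝ × E`. -/
def pball {E : Type*} [MetricSpace E] (c : ℝ × E) (r : ℝ) : Set (ℝ × E) :=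
  {p | pdist p c < r}

/-- The upper half space `X = (0,∞) × E` of `N = ℝ × E`. -/
def Xset (E : Type*) : Set (ℝ × E) := {p | 0 < p.1}

/-- The product measure `ν = Lebesgue ⊗ μ` on `N = ℝ × E`. -/
def pmeas {E : Type*} [MeasurableSpace E] (μ : Measure E) : Measure (ℝ × E) :=
  (volume : Measure ℝ).prod μ

/-- A `(1,2)`-atom on `N`: supported in a parabolic ball `Q`, mean value zero, and
`‖a‖_{L²(ν)} ≤ ν(Q)^{-1/2}`. -/
def IsAtom12 {E : Type*} [MetricSpace E] [MeasurableSpace E]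
    (μ : Measure E) (a : ℝ × E → ℝ) : Prop :=
  ∃ (c : ℝ × E) (r : ℝ), 0 < r ∧ Function.support a ⊆ pball c r ∧
    Integrable a (pmeas μ) ∧ (∫ p, a p ∂(pmeas μ)) = 0 ∧
    eLpNorm a 2 (pmeas μ) ≤ (pmeas μ (pball c r)) ^ (-(1:ℝ)/2)

/-- `f = Σ λ_i a_i` with convergence in `L¹(ρ)`. -/
def HasL1Decomp {E : Type*} [MeasurableSpace E] (ρ : Measure (ℝ × E))
    (f : ℝ × E → ℝ) (lam : ℕ → ℝ) (a : ℕ → ℝ × E → ℝ) : Prop :=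
  Summable (fun i => |lam i|) ∧
  Tendsto (fun k => eLpNorm (fun p => f p - ∑ i ∈ Finset.range k, lam i * a i p) 1 ρ)
    atTop (nhds 0)

/-- Membership in the atomic Hardy space `H¹(N)`. -/
def MemH1 {E : Type*} [MetricSpace E] [MeasurableSpace E]
    (μ : Measure E) (f : ℝ × E → ℝ) : Prop :=
  Integrable f (pmeas μ) ∧
  ∃ (lam : ℕ → ℝ) (a : ℕ → ℝ × E → ℝ), (∀ i, IsAtom12 μ (a i)) ∧
    HasL1Decomp (pmeas μ) f lam a

/-- The `H¹(N)` norm: infimum of `Σ |λ_i|` over all atomic decompositions. -/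
def H1norm {E : Type*} [MetricSpace E] [MeasurableSpace E]
    (μ : Measure E) (f : ℝ × E → ℝ) : ℝ :=
  sInf {c | ∃ (lam : ℕ → ℝ) (a : ℕ → ℝ × E → ℝ), (∀ i, IsAtom12 μ (a i)) ∧
    HasL1Decomp (pmeas μ) f lam a ∧ c = ∑' i, |lam i|}

/-- Membership in `H¹_r(X)`: `f ∈ L¹(X,ν)` is the restriction to `X` of some `F ∈ H¹(N)`. -/
def MemH1r {E : Type*} [MetricSpace E] [MeasurableSpace E]
    (μ : Measure E) (f : ℝ × E → ℝ) : Prop :=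
  IntegrableOn f (Xset E) (pmeas μ) ∧
  ∃ F : ℝ × E → ℝ, MemH1 μ F ∧ F =ᵐ[(pmeas μ).restrict (Xset E)] f

/-- The quotient norm on `H¹_r(X)`. -/
def H1rnorm {E : Type*} [MetricSpace E] [MeasurableSpace E]
    (μ : Measure E) (f : ℝ × E → ℝ) : ℝ :=
  sInf {c | ∃ F : ℝ × E → ℝ, MemH1 μ F ∧ F =ᵐ[(pmeas μ).restrict (Xset E)] f ∧
    c = H1norm μ F}

/-- Membership in `H¹_z(X)`: the extension of `f` by zero belongs to `H¹(N)`. -/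
def MemH1z {E : Type*} [MetricSpace E] [MeasurableSpace E]
    (μ : Measure E) (f : ℝ × E → ℝ) : Prop :=
  IntegrableOn f (Xset E) (pmeas μ) ∧ MemH1 μ ((Xset E).indicator f)

/-- The `H¹_z(X)` norm: the `H¹(N)` norm of the zero extension. -/
def H1znorm {E : Type*} [MetricSpace E] [MeasurableSpace E]
    (μ : Measure E) (f : ℝ × E → ℝ) : ℝ :=
  H1norm μ ((Xset E).indicator f)

/-- A `(1,2)`-atom whose supporting ball is entirely contained in `X`. -/
def IsAtom12In {E : Type*} [MetricSpace E] [MeasurableSpace E]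
    (μ : Measure E) (a : ℝ × E → ℝ) : Prop :=
  ∃ (c : ℝ × E) (r : ℝ), 0 < r ∧ Function.support a ⊆ pball c r ∧
    pball c r ⊆ Xset E ∧
    Integrable a (pmeas μ) ∧ (∫ p, a p ∂(pmeas μ)) = 0 ∧
    eLpNorm a 2 (pmeas μ) ≤ (pmeas μ (pball c r)) ^ (-(1:ℝ)/2)



set_option linter.unusedSectionVars false

section Aux

variable {E : Type*} [MetricSpace E] [MeasurableSpace E] [BorelSpace E] {μ : Measure E}

lemma mem_pball_iff {c p : ℝ × E} {r : ℝ} (hr : 0 < r) :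
    p ∈ pball c r ↔ |p.1 - c.1| < r ^ 2 ∧ dist p.2 c.2 < r := by
  simp only [pball, pdist, Set.mem_setOf_eq, max_lt_iff, Real.sqrt_lt' hr]

lemma pball_eq {c : ℝ × E} {r : ℝ} (hr : 0 < r) :
    pball c r = Set.Ioo (c.1 - r ^ 2) (c.1 + r ^ 2) ×ˢ Metric.ball c.2 r := by
  ext p
  rw [mem_pball_iff hr, Set.mem_prod, Set.mem_Ioo, Metric.mem_ball, abs_lt]
  constructor
  · rintro ⟨⟨h1, h2⟩, h3⟩; exact ⟨⟨by linarith, by linarith⟩, h3⟩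
  · rintro ⟨⟨h1, h2⟩, h3⟩; exact ⟨⟨by linarith, by linarith⟩, h3⟩

lemma pmeas_pball [SigmaFinite μ] {c : ℝ × E} {r : ℝ} (hr : 0 < r) :
    pmeas μ (pball c r) = ENNReal.ofReal (2 * r ^ 2) * μ (Metric.ball c.2 r) := by
  rw [pball_eq hr, pmeas, Measure.prod_prod, Real.volume_Ioo]
  congr 2
  ring

lemma measurableSet_Xset : MeasurableSet (Xset E) :=
  measurableSet_lt measurable_const measurable_fst

/-- The time reflection as a measurable equivalence. -/
def Req (E : Type*) [MeasurableSpace E] : (ℝ × E) ≃ᵐ (ℝ × E) :=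
  (MeasurableEquiv.neg ℝ).prodCongr (MeasurableEquiv.refl E)

lemma Req_apply (p : ℝ × E) : Req E p = (-p.1, p.2) := rfl

lemma measurePreserving_Req [SigmaFinite μ] :
    MeasurePreserving (Req E) (pmeas μ) (pmeas μ) :=
  (Measure.measurePreserving_neg _).prod (MeasurePreserving.id μ)

lemma boundary_null [SigmaFinite μ] : pmeas μ {p : ℝ × E | p.1 = 0} = 0 := by
  have h : {p : ℝ × E | p.1 = 0} = ({0} : Set ℝ) ×ˢ (Set.univ : Set E) := by
    ext p
    constructor
    · intro hp; exact ⟨by simpa using hp, Set.mem_univ _⟩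
    · rintro ⟨hp, -⟩; simpa using hp
  rw [h, pmeas, Measure.prod_prod]
  simp

end Aux

open scoped ENNReal

section AtomPush

variable {E : Type*} [MetricSpace E] [MeasurableSpace E] [BorelSpace E] {μ : Measure E}

lemma atom_push [SigmaFinite μ] {C_D : ℝ} (hCD : 1 ≤ C_D)
    (hvol : ∀ (x : E) (r : ℝ), 0 < r → 0 < μ (ball x r) ∧ μ (ball x r) < ⊤)
    (hdoub : ∀ (x : E) (r : ℝ), 0 < r →
      μ (ball x (2 * r)) ≤ ENNReal.ofReal C_D * μ (ball x r))
    {a : ℝ × E → ℝ} (ha : IsAtom12 μ a) :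
    IsAtom12In μ (fun p => (2 * Real.sqrt (2 * C_D))⁻¹ *
      (Xset E).indicator (fun q => a q + a (Req E q)) p) := by
  obtain ⟨c, r, hr, hsupp, hint, hmean, hnorm⟩ := ha
  set K : ℝ := 2 * Real.sqrt (2 * C_D) with hKdef
  have h2CD : (0:ℝ) < 2 * C_D := by linarith
  have hsqrt1 : 1 ≤ Real.sqrt (2 * C_D) := by
    rw [show (1:ℝ) = Real.sqrt 1 from (Real.sqrt_one).symm]
    exact Real.sqrt_le_sqrt (by linarith)
  have hK : (0:ℝ) < K := by positivity
  have hK1 : (1:ℝ) ≤ K := by nlinarith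
  set g : ℝ × E → ℝ := (Xset E).indicator (fun q => a q + a (Req E q)) with hgdef
  have hRint : Integrable (fun p : ℝ × E => a (Req E p)) (pmeas μ) :=
    (measurePreserving_Req.integrable_comp_emb (Req E).measurableEmbedding).2 hint
  have hg_int : Integrable g (pmeas μ) :=
    (hint.add hRint).indicator measurableSet_Xset
  have hb_int : Integrable (fun p => K⁻¹ * g p) (pmeas μ) := hg_int.const_mul _
  have hXc : MeasurableSet {p : ℝ × E | p.1 < 0} :=
    measurableSet_lt measurable_fst measurable_const
  -- splitting of g
  have hsplit : g = fun p => (Xset E).indicator a p +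
      (Xset E).indicator (fun q => a (Req E q)) p := by
    funext p
    by_cases hp : p ∈ Xset E <;> simp [hgdef, Set.indicator_apply, hp]
  have hcomp : ∀ p, (Xset E).indicator (fun q => a (Req E q)) p =
      ({q : ℝ × E | q.1 < 0}).indicator a (Req E p) := by
    intro p
    have hiff : p ∈ Xset E ↔ Req E p ∈ {q : ℝ × E | q.1 < 0} := by
      simp [Xset, Req_apply]
    by_cases hp : p ∈ Xset E
    · rw [Set.indicator_of_mem hp, Set.indicator_of_mem (hiff.1 hp)]
    · rw [Set.indicator_of_notMem hp, Set.indicator_of_notMem (fun h => hp (hiff.2 h))]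
  -- mean zero of g
  have hmean_g : (∫ p, g p ∂(pmeas μ)) = 0 := by
    have hint1 : Integrable ((Xset E).indicator a) (pmeas μ) :=
      hint.indicator measurableSet_Xset
    have hint2 : Integrable ({q : ℝ × E | q.1 < 0}.indicator a) (pmeas μ) :=
      hint.indicator hXc
    have hint2' : Integrable (fun p => ({q : ℝ × E | q.1 < 0}).indicator a (Req E p))
        (pmeas μ) :=
      (measurePreserving_Req.integrable_comp_emb (Req E).measurableEmbedding).2 hint2
    have h1 : (∫ p, g p ∂(pmeas μ)) = (∫ p, (Xset E).indicator a p ∂(pmeas μ)) +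
        ∫ p, ({q : ℝ × E | q.1 < 0}).indicator a (Req E p) ∂(pmeas μ) := by
      rw [show (∫ p, g p ∂(pmeas μ)) = ∫ p, ((Xset E).indicator a p +
          ({q : ℝ × E | q.1 < 0}).indicator a (Req E p)) ∂(pmeas μ) from
        integral_congr_ae (Eventually.of_forall fun p => by simp only [hsplit, hcomp])]
      exact integral_add hint1 hint2'
    have h2 : (∫ p, ({q : ℝ × E | q.1 < 0}).indicator a (Req E p) ∂(pmeas μ)) =
        ∫ p, ({q : ℝ × E | q.1 < 0}).indicator a p ∂(pmeas μ) :=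
      measurePreserving_Req.integral_comp' _
    have hae : ∀ᵐ p ∂(pmeas μ), p.1 ≠ (0:ℝ) := by
      rw [ae_iff]
      convert boundary_null (μ := μ) using 2
      ext p; simp
    have h3 : (∫ p, ((Xset E).indicator a p + ({q : ℝ × E | q.1 < 0}).indicator a p)
        ∂(pmeas μ)) = ∫ p, a p ∂(pmeas μ) := by
      refine integral_congr_ae ?_
      filter_upwards [hae] with p hp
      rcases lt_or_gt_of_ne hp with h | h
      · rw [Set.indicator_of_notMem (by simpa [Xset] using not_lt.2 h.le),
          Set.indicator_of_mem (by simpa using h), zero_add]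
      · rw [Set.indicator_of_mem (by simpa [Xset] using h),
          Set.indicator_of_notMem (by simpa using not_lt.2 h.le), add_zero]
    rw [h1, h2, ← integral_add hint1 hint2, h3, hmean]
  -- mean zero of the rescaled function
  have hmean_b : (∫ p, K⁻¹ * g p ∂(pmeas μ)) = 0 := by
    rw [integral_const_mul, hmean_g, mul_zero]
  -- the eLpNorm of the rescaled function
  have hofK : (ENNReal.ofReal K) = 2 * (ENNReal.ofReal (2 * C_D)) ^ ((1:ℝ)/2) := by
    rw [hKdef, ENNReal.ofReal_mul (by norm_num : (0:ℝ) ≤ 2),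
      Real.sqrt_eq_rpow, ← ENNReal.ofReal_rpow_of_pos h2CD]
    norm_num
  have hsmul : eLpNorm (fun p => K⁻¹ * g p) 2 (pmeas μ) =
      (ENNReal.ofReal K)⁻¹ * eLpNorm g 2 (pmeas μ) := by
    have h := eLpNorm_const_smul (μ := pmeas μ) (K⁻¹) g 2
    rw [show (K⁻¹ • g) = fun p => K⁻¹ * g p from rfl] at h
    rw [h, Real.enorm_eq_ofReal (inv_nonneg.2 hK.le), ENNReal.ofReal_inv_of_pos hK]
  have hKinv_le : (ENNReal.ofReal K)⁻¹ ≤ 1 :=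
    ENNReal.inv_le_one.2 (ENNReal.one_le_ofReal.2 hK1)
  have hsupp' : ∀ p, a p ≠ 0 → |p.1 - c.1| < r ^ 2 ∧ dist p.2 c.2 < r := fun p hp =>
    (mem_pball_iff hr).1 (hsupp hp)
  have hsuppR : ∀ p : ℝ × E, a (Req E p) ≠ 0 →
      |(-p.1) - c.1| < r ^ 2 ∧ dist p.2 c.2 < r := by
    intro p hp
    have h := (mem_pball_iff hr).1 (hsupp hp)
    rw [Req_apply] at h
    exact h
  rcases le_or_gt (r ^ 2) c.1 with hcase | hcase1
  · -- Case A : the ball is already inside X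
    have hball_sub : pball c r ⊆ Xset E := by
      intro p hp
      rw [mem_pball_iff hr] at hp
      have := abs_lt.1 hp.1
      simp only [Xset, Set.mem_setOf_eq]
      linarith [this.1]
    have hga : g = a := by
      funext p
      by_cases hp : p ∈ Xset E
      · rw [hgdef, Set.indicator_of_mem hp]
        have hz : a (Req E p) = 0 := by
          by_contra h
          have hm := abs_lt.1 (hsuppR p h).1
          have hpX : (0:ℝ) < p.1 := hp
          linarith [hm.1]
        rw [hz, add_zero]
      · rw [hgdef, Set.indicator_of_notMem hp]
        by_contra h
        exact hp (hball_sub (hsupp fun h0 => h h0.symm))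
    refine ⟨c, r, hr, ?_, hball_sub, hb_int, hmean_b, ?_⟩
    · intro p hp
      refine hsupp ?_
      intro h0
      apply hp
      simp only [hga, h0, mul_zero]
    · calc eLpNorm (fun p => K⁻¹ * g p) 2 (pmeas μ)
          = (ENNReal.ofReal K)⁻¹ * eLpNorm g 2 (pmeas μ) := hsmul
        _ ≤ 1 * (pmeas μ (pball c r)) ^ (-(1:ℝ)/2) := by
            refine mul_le_mul' hKinv_le ?_
            rw [hga]; exact hnorm
        _ = (pmeas μ (pball c r)) ^ (-(1:ℝ)/2) := one_mul _
  rcases le_or_gt c.1 (-(r ^ 2)) with hcase | hcase2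
  · -- Case B : the ball is inside the lower half space, reflect it
    have hga : g = fun p => a (Req E p) := by
      funext p
      by_cases hp : p ∈ Xset E
      · rw [hgdef, Set.indicator_of_mem hp]
        have hz : a p = 0 := by
          by_contra h
          have hm := abs_lt.1 (hsupp' p h).1
          have hpX : (0:ℝ) < p.1 := hp
          linarith [hm.2]
        rw [hz, zero_add]
      · rw [hgdef, Set.indicator_of_notMem hp]
        by_contra h
        have hm := abs_lt.1 (hsuppR p fun h0 => h h0.symm).1
        exact hp (show (0:ℝ) < p.1 by linarith [hm.2])
    refine ⟨(-c.1, c.2), r, hr, ?_, ?_, hb_int, hmean_b, ?_⟩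
    · intro p hp
      have hz : a (Req E p) ≠ 0 := by
        intro h0
        apply hp
        simp only [hga, h0, mul_zero]
      have hm := hsuppR p hz
      rw [mem_pball_iff hr]
      dsimp only
      constructor
      · have : |p.1 - -c.1| = |(-p.1) - c.1| := by
          rw [← abs_neg]; congr 1; ring
        rw [this]; exact hm.1
      · exact hm.2
    · intro p hp
      rw [mem_pball_iff hr] at hp
      dsimp only at hp
      have := abs_lt.1 hp.1
      simp only [Xset, Set.mem_setOf_eq]
      linarith [this.1]
    · have hgnorm : eLpNorm g 2 (pmeas μ) = eLpNorm a 2 (pmeas μ) := by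
        rw [hga]
        exact eLpNorm_comp_measurePreserving hint.aestronglyMeasurable measurePreserving_Req
      have hmeq : pmeas μ (pball ((-c.1, c.2) : ℝ × E) r) = pmeas μ (pball c r) := by
        rw [pmeas_pball hr, pmeas_pball hr]
      calc eLpNorm (fun p => K⁻¹ * g p) 2 (pmeas μ)
          = (ENNReal.ofReal K)⁻¹ * eLpNorm g 2 (pmeas μ) := hsmul
        _ ≤ 1 * (pmeas μ (pball c r)) ^ (-(1:ℝ)/2) := by
            refine mul_le_mul' hKinv_le ?_
            rw [hgnorm]; exact hnorm
        _ = (pmeas μ (pball ((-c.1, c.2) : ℝ × E) r)) ^ (-(1:ℝ)/2) := by rw [one_mul, hmeq]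
  · -- Case C : the ball straddles the boundary
    set ρ : ℝ := Real.sqrt 2 * r with hρdef
    have hs2 : (1:ℝ) < Real.sqrt 2 := by
      rw [show (1:ℝ) = Real.sqrt 1 from (Real.sqrt_one).symm]
      exact Real.sqrt_lt_sqrt (by norm_num) (by norm_num)
    have hρ : 0 < ρ := by positivity
    have hρ2 : ρ ^ 2 = 2 * r ^ 2 := by
      rw [hρdef, mul_pow, Real.sq_sqrt (by norm_num : (0:ℝ) ≤ 2)]
    have hrρ : r < ρ := by nlinarith
    -- support of g
    have hsupp_g : ∀ p : ℝ × E, g p ≠ 0 →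
        (0 < p.1 ∧ p.1 < 2 * r ^ 2 ∧ dist p.2 c.2 < r) := by
      intro p hp
      have hpX : p ∈ Xset E := by
        by_contra h
        exact hp (by rw [hgdef, Set.indicator_of_notMem h])
      have hval : a p + a (Req E p) ≠ 0 := by
        intro h0
        exact hp (by rw [hgdef, Set.indicator_of_mem hpX, h0])
      have hone : a p ≠ 0 ∨ a (Req E p) ≠ 0 := by
        by_contra h
        push_neg at h
        exact hval (by rw [h.1, h.2, add_zero])
      have hpX' : (0:ℝ) < p.1 := hpX
      rcases hone with h | h
      · have hm := hsupp' p h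
        have h1 := abs_lt.1 hm.1
        exact ⟨hpX', by linarith [h1.2], hm.2⟩
      · have hm := hsuppR p h
        have h1 := abs_lt.1 hm.1
        exact ⟨hpX', by linarith [h1.1], hm.2⟩
    refine ⟨((2 * r ^ 2 : ℝ), c.2), ρ, hρ, ?_, ?_, hb_int, hmean_b, ?_⟩
    · intro p hp
      have hz : g p ≠ 0 := by
        intro h0
        apply hp
        simp only [h0, mul_zero]
      obtain ⟨h1, h2, h3⟩ := hsupp_g p hz
      rw [mem_pball_iff hρ]
      dsimp only
      refine ⟨?_, lt_trans h3 hrρ⟩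
      rw [abs_lt, hρ2]
      constructor <;> linarith
    · intro p hp
      rw [mem_pball_iff hρ] at hp
      dsimp only at hp
      have := abs_lt.1 hp.1
      rw [hρ2] at this
      simp only [Xset, Set.mem_setOf_eq]
      linarith [this.1]
    · -- the L² estimate
      set κ : ℝ≥0∞ := ENNReal.ofReal (2 * C_D) with hκdef
      have hκ0 : κ ≠ 0 := by
        simp only [hκdef, ne_eq, ENNReal.ofReal_eq_zero, not_le]
        linarith
      have hκtop : κ ≠ ⊤ := ENNReal.ofReal_ne_top
      set A : ℝ≥0∞ := pmeas μ (pball c r) with hAdef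
      set B : ℝ≥0∞ := pmeas μ (pball (((2 * r ^ 2 : ℝ), c.2) : ℝ × E) ρ) with hBdef
      have hA0 : A ≠ 0 := by
        rw [hAdef, pmeas_pball hr]
        exact mul_ne_zero (by simp; positivity) (hvol c.2 r hr).1.ne'
      have hAtop : A ≠ ⊤ := by
        rw [hAdef, pmeas_pball hr]
        exact ENNReal.mul_ne_top ENNReal.ofReal_ne_top (hvol c.2 r hr).2.ne
      have hB0 : B ≠ 0 := by
        rw [hBdef, pmeas_pball hρ]
        exact mul_ne_zero (by simp; positivity) (hvol c.2 ρ hρ).1.ne'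
      -- B ≤ κ * A
      have hBle : B ≤ κ * A := by
        rw [hBdef, hAdef, pmeas_pball hρ, pmeas_pball hr]
        have hmono : μ (ball c.2 ρ) ≤ μ (ball c.2 (2 * r)) := by
          refine measure_mono (ball_subset_ball ?_)
          have h24 : Real.sqrt 2 ≤ 2 := by
            nlinarith [Real.sq_sqrt (show (0:ℝ) ≤ 2 by norm_num), Real.sqrt_nonneg 2]
          calc ρ = Real.sqrt 2 * r := hρdef
            _ ≤ 2 * r := mul_le_mul_of_nonneg_right h24 hr.le
        have hdb := hdoub c.2 r hr
        calc ENNReal.ofReal (2 * ρ ^ 2) * μ (ball c.2 ρ)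
            ≤ ENNReal.ofReal (2 * ρ ^ 2) * (ENNReal.ofReal C_D * μ (ball c.2 r)) :=
              mul_le_mul_right (hmono.trans hdb) _
          _ = κ * (ENNReal.ofReal (2 * r ^ 2) * μ (ball c.2 r)) := by
              rw [hκdef, ← mul_assoc, ← mul_assoc,
                ← ENNReal.ofReal_mul (by positivity : (0:ℝ) ≤ 2 * ρ ^ 2),
                ← ENNReal.ofReal_mul (by positivity : (0:ℝ) ≤ 2 * C_D)]
              congr 1
              rw [hρ2]
              ring
      -- A ^ (-1/2) ≤ κ ^ (1/2) * B ^ (-1/2)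
      have hstep : A ^ (-(1:ℝ)/2) ≤ κ ^ ((1:ℝ)/2) * B ^ (-(1:ℝ)/2) := by
        have hmono2 : (κ * A) ^ (-(1:ℝ)/2) ≤ B ^ (-(1:ℝ)/2) := by
          rw [show (-(1:ℝ)/2) = -(1/2) by norm_num, ENNReal.rpow_neg, ENNReal.rpow_neg]
          exact ENNReal.inv_le_inv.2 (ENNReal.rpow_le_rpow hBle (by norm_num))
        have heq : A ^ (-(1:ℝ)/2) = κ ^ ((1:ℝ)/2) * (κ * A) ^ (-(1:ℝ)/2) := by
          rw [ENNReal.mul_rpow_of_ne_zero hκ0 hA0, ← mul_assoc,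
            ← ENNReal.rpow_add _ _ hκ0 hκtop]
          norm_num
        rw [heq]
        exact mul_le_mul_right hmono2 _
      -- eLpNorm g ≤ 2 * eLpNorm a
      have hg_le : eLpNorm g 2 (pmeas μ) ≤ 2 * eLpNorm a 2 (pmeas μ) := by
        have h1 : eLpNorm g 2 (pmeas μ) ≤
            eLpNorm ((Xset E).indicator a) 2 (pmeas μ) +
            eLpNorm ((Xset E).indicator (fun q => a (Req E q))) 2 (pmeas μ) := by
          rw [hsplit]
          exact eLpNorm_add_le ((hint.indicator measurableSet_Xset).aestronglyMeasurable)
            ((hRint.indicator measurableSet_Xset).aestronglyMeasurable) (by norm_num)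
        have h2 : eLpNorm ((Xset E).indicator a) 2 (pmeas μ) ≤ eLpNorm a 2 (pmeas μ) :=
          eLpNorm_indicator_le _
        have h3 : eLpNorm ((Xset E).indicator (fun q => a (Req E q))) 2 (pmeas μ) ≤
            eLpNorm a 2 (pmeas μ) := by
          refine (eLpNorm_indicator_le _).trans ?_
          rw [show (fun q : ℝ × E => a (Req E q)) = a ∘ (Req E) from rfl]
          rw [eLpNorm_comp_measurePreserving hint.aestronglyMeasurable measurePreserving_Req]
        calc eLpNorm g 2 (pmeas μ) ≤ _ + _ := h1
          _ ≤ eLpNorm a 2 (pmeas μ) + eLpNorm a 2 (pmeas μ) := add_le_add h2 h3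
          _ = 2 * eLpNorm a 2 (pmeas μ) := (two_mul _).symm
      -- putting everything together
      have hK2 : ENNReal.ofReal K = 2 * κ ^ ((1:ℝ)/2) := by
        rw [hofK, hκdef]
      have hKfac0 : (2 : ℝ≥0∞) * κ ^ ((1:ℝ)/2) ≠ 0 := by
        refine mul_ne_zero (by norm_num) ?_
        simp only [ne_eq, ENNReal.rpow_eq_zero_iff, not_or]
        constructor
        · rintro ⟨h, -⟩; exact hκ0 h
        · rintro ⟨h, -⟩; exact hκtop h
      have hKfactop : (2 : ℝ≥0∞) * κ ^ ((1:ℝ)/2) ≠ ⊤ := by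
        refine ENNReal.mul_ne_top (by norm_num) ?_
        simp only [ne_eq, ENNReal.rpow_eq_top_iff, not_or]
        constructor
        · rintro ⟨h, -⟩; exact hκ0 h
        · rintro ⟨h, -⟩; exact hκtop h
      calc eLpNorm (fun p => K⁻¹ * g p) 2 (pmeas μ)
          = (ENNReal.ofReal K)⁻¹ * eLpNorm g 2 (pmeas μ) := hsmul
        _ ≤ (ENNReal.ofReal K)⁻¹ * (2 * (κ ^ ((1:ℝ)/2) * B ^ (-(1:ℝ)/2))) := by
            refine mul_le_mul_right ?_ _
            refine hg_le.trans ?_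
            refine (mul_le_mul_right (hnorm.trans hstep) 2).trans_eq ?_
            rfl
        _ = B ^ (-(1:ℝ)/2) := by
            rw [hK2, show (2 : ℝ≥0∞) * (κ ^ ((1:ℝ)/2) * B ^ (-(1:ℝ)/2)) =
              (2 * κ ^ ((1:ℝ)/2)) * B ^ (-(1:ℝ)/2) from by ring, ← mul_assoc,
              ENNReal.inv_mul_cancel hKfac0 hKfactop, one_mul]

end AtomPush

lemma sigmaFinite_of_hvol {E : Type*} [MetricSpace E] [MeasurableSpace E] {μ : Measure E}
    (hvol : ∀ (x : E) (r : ℝ), 0 < r → 0 < μ (ball x r) ∧ μ (ball x r) < ⊤) :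
    SigmaFinite μ := by
  rcases isEmpty_or_nonempty E with hE | hE
  · refine Measure.sigmaFinite_of_countable (Set.countable_singleton (∅ : Set E)) ?_ ?_
    · rintro s rfl
      simp
    · rw [Set.sUnion_singleton, Set.univ_eq_empty_iff.2 hE]
  · obtain ⟨x0⟩ := hE
    refine Measure.sigmaFinite_of_countable
      (Set.countable_range (fun n : ℕ => ball x0 ((n : ℝ) + 1))) ?_ ?_
    · rintro s ⟨n, rfl⟩
      exact (hvol x0 ((n : ℝ) + 1) (by positivity)).2
    · rw [Set.sUnion_range]
      refine Set.eq_univ_of_forall fun x => ?_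
      obtain ⟨n, hn⟩ := exists_nat_gt (dist x x0)
      exact Set.mem_iUnion.2 ⟨n, mem_ball.2 (by linarith)⟩

theorem stmt2' {E : Type*} [MetricSpace E] [MeasurableSpace E] [BorelSpace E]
    (μ : Measure E) (C_D : ℝ) (hCD : 1 ≤ C_D)
    (hvol : ∀ (x : E) (r : ℝ), 0 < r → 0 < μ (ball x r) ∧ μ (ball x r) < ⊤)
    (hdoub : ∀ (x : E) (r : ℝ), 0 < r →
      μ (ball x (2 * r)) ≤ ENNReal.ofReal C_D * μ (ball x r))
    (f : ℝ × E → ℝ) (hf : IntegrableOn f (Xset E) (pmeas μ)) :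
    (IntegrableOn f (Xset E) (pmeas μ) ∧
      (Integrable ((Xset E).indicator f) (pmeas μ) ∧
      ∃ (lam : ℕ → ℝ) (a : ℕ → ℝ × E → ℝ), (∀ i, IsAtom12 μ (a i)) ∧
        (Summable (fun i => |lam i|) ∧
        Tendsto (fun k => eLpNorm
          (fun p => (Xset E).indicator f p - ∑ i ∈ Finset.range k, lam i * a i p) 1 (pmeas μ))
          atTop (nhds 0)))) ↔
      ∃ (lam : ℕ → ℝ) (a : ℕ → ℝ × E → ℝ), (∀ i, IsAtom12In μ (a i)) ∧
        Summable (fun i => |lam i|) ∧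
        Tendsto (fun k => eLpNorm
            (fun p => f p - ∑ i ∈ Finset.range k, lam i * a i p) 1
            ((pmeas μ).restrict (Xset E)))
          atTop (nhds 0) := by
  haveI : SigmaFinite μ := sigmaFinite_of_hvol hvol
  constructor
  · rintro ⟨-, hFint, lam, a, hatoms, hsum, htend⟩
    have haint : ∀ i, Integrable (a i) (pmeas μ) := fun i => by
      obtain ⟨c, r, -, -, h, -, -⟩ := hatoms i; exact h
    set K : ℝ := 2 * Real.sqrt (2 * C_D) with hKdef
    have h2CD : (0:ℝ) < 2 * C_D := by linarith
    have hsqrt1 : 1 ≤ Real.sqrt (2 * C_D) := by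
      rw [show (1:ℝ) = Real.sqrt 1 from (Real.sqrt_one).symm]
      exact Real.sqrt_le_sqrt (by linarith)
    have hK : (0:ℝ) < K := by positivity
    set F := (Xset E).indicator f with hFdef
    set g : ℕ → ℝ × E → ℝ :=
      fun i => (Xset E).indicator (fun q => a i q + a i (Req E q)) with hgdef
    refine ⟨fun i => K * lam i, fun i => fun p => K⁻¹ * g i p,
      fun i => atom_push hCD hvol hdoub (hatoms i), ?_, ?_⟩
    · simp_rw [abs_mul]
      exact hsum.mul_left _
    · -- convergence of the new decomposition on X
      have hhint : ∀ k, Integrable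
          (fun p => F p - ∑ i ∈ Finset.range k, lam i * a i p) (pmeas μ) := fun k =>
        ((hf.integrable_indicator measurableSet_Xset).sub
          (integrable_finset_sum _ fun i _ => (haint i).const_mul _))
      have hhRint : ∀ k, Integrable
          (fun p => F (Req E p) - ∑ i ∈ Finset.range k, lam i * a i (Req E p))
          (pmeas μ) := fun k =>
        (measurePreserving_Req.integrable_comp_emb (Req E).measurableEmbedding).2 (hhint k)
      have hbound : ∀ k, eLpNorm
          (fun p => f p - ∑ i ∈ Finset.range k, (K * lam i) * (K⁻¹ * g i p)) 1
          ((pmeas μ).restrict (Xset E)) ≤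
          2 * eLpNorm (fun p => F p - ∑ i ∈ Finset.range k, lam i * a i p) 1 (pmeas μ) := by
        intro k
        have hcongr : (fun p => f p - ∑ i ∈ Finset.range k, (K * lam i) * (K⁻¹ * g i p))
            =ᵐ[(pmeas μ).restrict (Xset E)]
            (fun p => (F p - ∑ i ∈ Finset.range k, lam i * a i p) +
              (F (Req E p) - ∑ i ∈ Finset.range k, lam i * a i (Req E p))) := by
          filter_upwards [ae_restrict_mem measurableSet_Xset] with p hp
          have hpX : (0:ℝ) < p.1 := hp
          have hfF : F p = f p := Set.indicator_of_mem hp f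
          have hFR : F (Req E p) = 0 := by
            refine Set.indicator_of_notMem ?_ f
            simp only [Xset, Req_apply, Set.mem_setOf_eq, not_lt]
            linarith
          have hterm : ∀ i ∈ Finset.range k,
              (K * lam i) * (K⁻¹ * g i p) = lam i * a i p + lam i * a i (Req E p) := by
            intro i _
            simp only [hgdef]
            rw [Set.indicator_of_mem hp]
            field_simp
          calc f p - ∑ i ∈ Finset.range k, (K * lam i) * (K⁻¹ * g i p)
              = F p - (∑ i ∈ Finset.range k, lam i * a i p +
                  ∑ i ∈ Finset.range k, lam i * a i (Req E p)) := by
                rw [Finset.sum_congr rfl hterm, Finset.sum_add_distrib, hfF]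
            _ = (F p - ∑ i ∈ Finset.range k, lam i * a i p) +
                (F (Req E p) - ∑ i ∈ Finset.range k, lam i * a i (Req E p)) := by
                rw [hFR]; ring
        calc eLpNorm
              (fun p => f p - ∑ i ∈ Finset.range k, (K * lam i) * (K⁻¹ * g i p)) 1
              ((pmeas μ).restrict (Xset E))
            = eLpNorm (fun p => (F p - ∑ i ∈ Finset.range k, lam i * a i p) +
                (F (Req E p) - ∑ i ∈ Finset.range k, lam i * a i (Req E p))) 1
                ((pmeas μ).restrict (Xset E)) := eLpNorm_congr_ae hcongr
          _ ≤ eLpNorm (fun p => (F p - ∑ i ∈ Finset.range k, lam i * a i p) +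
                (F (Req E p) - ∑ i ∈ Finset.range k, lam i * a i (Req E p))) 1
                (pmeas μ) := eLpNorm_mono_measure _ Measure.restrict_le_self
          _ ≤ eLpNorm (fun p => F p - ∑ i ∈ Finset.range k, lam i * a i p) 1 (pmeas μ) +
              eLpNorm (fun p => F (Req E p) - ∑ i ∈ Finset.range k, lam i * a i (Req E p))
                1 (pmeas μ) :=
              eLpNorm_add_le (hhint k).aestronglyMeasurable
                (hhRint k).aestronglyMeasurable le_rfl
          _ = 2 * eLpNorm (fun p => F p - ∑ i ∈ Finset.range k, lam i * a i p) 1 (pmeas μ) := by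
              rw [show (fun p => F (Req E p) - ∑ i ∈ Finset.range k, lam i * a i (Req E p)) =
                (fun p => F p - ∑ i ∈ Finset.range k, lam i * a i p) ∘ (Req E) from rfl,
                eLpNorm_comp_measurePreserving (hhint k).aestronglyMeasurable
                  measurePreserving_Req, two_mul]
      have h2 : Tendsto (fun k => 2 * eLpNorm
          (fun p => F p - ∑ i ∈ Finset.range k, lam i * a i p) 1 (pmeas μ))
          atTop (nhds 0) := by
        have := ENNReal.Tendsto.const_mul (a := 2) htend (Or.inr (by norm_num))
        simpa using this
      exact tendsto_of_tendsto_of_tendsto_of_le_of_le tendsto_const_nhds h2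
        (fun k => zero_le) hbound
  · rintro ⟨lam, a, hatoms, hsum, htend⟩
    have hz : ∀ i, ∀ p, p ∉ Xset E → a i p = 0 := by
      intro i p hp
      obtain ⟨c, r, -, hsupp, hsub, -, -, -⟩ := hatoms i
      by_contra h
      exact hp (hsub (hsupp h))
    refine ⟨hf, (integrable_indicator_iff measurableSet_Xset).2 hf, lam, a,
      fun i => ?_, hsum, ?_⟩
    · obtain ⟨c, r, h1, h2, -, h4, h5, h6⟩ := hatoms i
      exact ⟨c, r, h1, h2, h4, h5, h6⟩
    · have hEq : ∀ k, eLpNorm (fun p => (Xset E).indicator f p -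
          ∑ i ∈ Finset.range k, lam i * a i p) 1 (pmeas μ) =
          eLpNorm (fun p => f p - ∑ i ∈ Finset.range k, lam i * a i p) 1
            ((pmeas μ).restrict (Xset E)) := by
        intro k
        rw [← eLpNorm_indicator_eq_eLpNorm_restrict measurableSet_Xset]
        congr 1
        funext p
        by_cases hp : p ∈ Xset E
        · rw [Set.indicator_of_mem hp, Set.indicator_of_mem hp]
        · rw [Set.indicator_of_notMem hp, Set.indicator_of_notMem hp]
          have hsz : ∀ i ∈ Finset.range k, lam i * a i p = 0 := fun i _ => by
            rw [hz i p hp, mul_zero]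
          rw [Finset.sum_congr rfl hsz, Finset.sum_const_zero, sub_zero]
      rw [show (fun k => eLpNorm (fun p => (Xset E).indicator f p -
          ∑ i ∈ Finset.range k, lam i * a i p) 1 (pmeas μ)) =
          fun k => eLpNorm (fun p => f p - ∑ i ∈ Finset.range k, lam i * a i p) 1
            ((pmeas μ).restrict (Xset E)) from funext hEq]
      exact htend

/-- an integrable function `f` on `X` belongs to `H¹_z(X)` iff
`f = Σ λ_i a_i` in `L¹(X,ν)` with `Σ|λ_i| < ∞` and `(1,2)`-atoms `a_i` whose supporting
balls are entirely contained in `X`. -/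
theorem stmt2 {E : Type*} [MetricSpace E] [MeasurableSpace E] [BorelSpace E]
    (μ : Measure E) (C_D : ℝ) (hCD : 1 ≤ C_D)
    (hvol : ∀ (x : E) (r : ℝ), 0 < r → 0 < μ (ball x r) ∧ μ (ball x r) < ⊤)
    (hdoub : ∀ (x : E) (r : ℝ), 0 < r →
      μ (ball x (2 * r)) ≤ ENNReal.ofReal C_D * μ (ball x r))
    (f : ℝ × E → ℝ) (hf : IntegrableOn f (Xset E) (pmeas μ)) :
    MemH1z μ f ↔
      ∃ (lam : ℕ → ℝ) (a : ℕ → ℝ × E → ℝ), (∀ i, IsAtom12In μ (a i)) ∧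
        Summable (fun i => |lam i|) ∧
        Tendsto (fun k => eLpNorm
            (fun p => f p - ∑ i ∈ Finset.range k, lam i * a i p) 1
            ((pmeas μ).restrict (Xset E)))
          atTop (nhds 0) := by
  exact stmt2' μ C_D hCD hvol hdoub f hf
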